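/- A quadratic function x ↦ xᵀQx on ℝⁿ (Q symmetric) is submodular if and only if all off-diagonal entries of Q are nonpositive. -/

import Mathlib

open Matrix

lemma qsub_key (n : ℕ) (Q : Matrix (Fin n) (Fin n) ℝ) (hQ : Q.IsSymm)
    (m u v : Fin n → ℝ) :
    (m + u) ⬝ᵥ Q.mulVec (m + u) + (m + v) ⬝ᵥ Q.mulVec (m + v)
      = m ⬝ᵥ Q.mulVec m + (m + u + v) ⬝ᵥ Q.mulVec (m + u + v)
        - 2 * (u ⬝ᵥ Q.mulVec v) := by
  have hsym : ∀ a b : Fin n → ℝ, a ⬝ᵥ Q.mulVec b = b ⬝ᵥ Q.mulVec a := fun a b => by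
    rw [Matrix.dotProduct_mulVec, ← Matrix.mulVec_transpose, hQ.eq, dotProduct_comm]
  simp only [Matrix.mulVec_add, add_dotProduct, dotProduct_add]
  linarith [hsym m u, hsym m v, hsym u v]

theorem quadratic_submodular_iff (n : ℕ) (Q : Matrix (Fin n) (Fin n) ℝ)
    (hQ : Q.IsSymm) :
    (∀ x y : Fin n → ℝ,
      (x ⊓ y) ⬝ᵥ Q.mulVec (x ⊓ y) + (x ⊔ y) ⬝ᵥ Q.mulVec (x ⊔ y) ≤
        x ⬝ᵥ Q.mulVec x + y ⬝ᵥ Q.mulVec y)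
    ↔ (∀ i j : Fin n, i ≠ j → Q i j ≤ 0) := by
  constructor
  · intro h i j hij
    have hinf : (Pi.single i (1:ℝ)) ⊓ (Pi.single j 1) = (0 : Fin n → ℝ) := by
      funext k
      simp only [Pi.inf_apply, Pi.zero_apply]
      by_cases hk : k = i
      · subst hk; simp [Pi.single_eq_of_ne hij]
      · by_cases hk' : k = j
        · subst hk'; simp [Pi.single_eq_of_ne hk]
        · simp [Pi.single_eq_of_ne hk, Pi.single_eq_of_ne hk']
    have hsup : (Pi.single i (1:ℝ)) ⊔ (Pi.single j 1)
        = (0 : Fin n → ℝ) + Pi.single i 1 + Pi.single j 1 := by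
      funext k
      simp only [Pi.sup_apply, Pi.add_apply, Pi.zero_apply]
      by_cases hk : k = i
      · subst hk; simp [Pi.single_eq_of_ne hij]
      · by_cases hk' : k = j
        · subst hk'; simp [Pi.single_eq_of_ne hk]
        · simp [Pi.single_eq_of_ne hk, Pi.single_eq_of_ne hk']
    have h1 := h (Pi.single i 1) (Pi.single j 1)
    rw [hinf, hsup] at h1
    have h2 := qsub_key n Q hQ 0 (Pi.single i 1) (Pi.single j 1)
    simp only [zero_add] at h1 h2
    have h3 : (Pi.single i (1:ℝ)) ⬝ᵥ Q.mulVec (Pi.single j 1) = Q i j := by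
      simp [Matrix.mulVec_single, dotProduct_single]
    have h0 : (0 : Fin n → ℝ) ⬝ᵥ Q.mulVec 0 = 0 := by simp
    nlinarith [h1, h2]
  · intro h x y
    set m := x ⊓ y with hm
    set u := x - m with hu
    set v := y - m with hv
    have hx : x = m + u := by rw [hu]; ring
    have hy : y = m + v := by rw [hv]; ring
    have hsup : x ⊔ y = m + u + v := by
      funext k
      simp only [Pi.sup_apply, Pi.add_apply, hu, hv, hm, Pi.sub_apply, Pi.inf_apply]
      rcases le_total (x k) (y k) with hk | hk
      · rw [max_eq_right hk, min_eq_left hk]; ring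
      · rw [max_eq_left hk, min_eq_right hk]; ring
    have huv : u ⬝ᵥ Q.mulVec v ≤ 0 := by
      simp only [dotProduct, Matrix.mulVec, Finset.mul_sum]
      apply Finset.sum_nonpos
      intro i _
      apply Finset.sum_nonpos
      intro j _
      rcases eq_or_ne i j with rfl | hij
      · have : u i * v i = 0 := by
          simp only [hu, hv, hm, Pi.sub_apply, Pi.inf_apply]
          rcases le_total (x i) (y i) with hk | hk
          · rw [min_eq_left hk]; ring
          · rw [min_eq_right hk]; ring
        calc u i * (Q i i * v i) = Q i i * (u i * v i) := by ring
        _ = 0 := by rw [this]; ring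
        _ ≤ 0 := le_refl 0
      · have hu0 : 0 ≤ u i := by
          simp only [hu, hm, Pi.sub_apply, Pi.inf_apply, sub_nonneg]
          exact min_le_left _ _
        have hv0 : 0 ≤ v j := by
          simp only [hv, hm, Pi.sub_apply, Pi.inf_apply, sub_nonneg]
          exact min_le_right _ _
        calc u i * (Q i j * v j) = Q i j * (u i * v j) := by ring
        _ ≤ 0 := mul_nonpos_of_nonpos_of_nonneg (h i j hij) (mul_nonneg hu0 hv0)
    calc (x ⊓ y) ⬝ᵥ Q.mulVec (x ⊓ y) + (x ⊔ y) ⬝ᵥ Q.mulVec (x ⊔ y)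
        = m ⬝ᵥ Q.mulVec m + (m + u + v) ⬝ᵥ Q.mulVec (m + u + v) := by rw [← hm, hsup]
      _ = (m + u) ⬝ᵥ Q.mulVec (m + u) + (m + v) ⬝ᵥ Q.mulVec (m + v)
            + 2 * (u ⬝ᵥ Q.mulVec v) := by rw [qsub_key n Q hQ m u v]; ring
      _ ≤ (m + u) ⬝ᵥ Q.mulVec (m + u) + (m + v) ⬝ᵥ Q.mulVec (m + v) := by linarith
      _ = x ⬝ᵥ Q.mulVec x + y ⬝ᵥ Q.mulVec y := by rw [← hx, ← hy]
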